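/- Let G be a finite abelian group with |G| ≥ 3 containing either an element of order 4 or two independent elements of order 2 or an element of odd prime order. Then for every k ∈ ℕ and y ∈ ℕ₀, the shifted interval y + [2k, 3k] belongs to the system of sets of lengths L(G) = {L(B) : B ∈ B(G)}. Consequently {y + 2k + [0,k] : y, k ∈ ℕ₀} ⊆ L(G) for every finite abelian group G with |G| ≥ 3. -/

import Mathlib

set_option linter.unusedSectionVars false

variable {G : Type*} [AddCommGroup G]

/-- `S` is a minimal zero-sum sequence over `G`. -/
def IsMinZS (S : Multiset G) : Prop :=
  S ≠ 0 ∧ S.sum = 0 ∧ ∀ T : Multiset G, T ≤ S → T ≠ 0 → T ≠ S → T.sum ≠ 0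

/-- The set of factorization lengths of `S` into atoms (minimal zero-sum sequences)
of the monoid of zero-sum sequences over `G`. -/
def ZSLengths (S : Multiset G) : Set ℕ :=
  {n | ∃ l : Multiset (Multiset G),
    Multiset.card l = n ∧ (∀ T ∈ l, IsMinZS T) ∧ l.sum = S}

namespace ZSAux

lemma sum_replicate_singleton (n : ℕ) :
    (Multiset.replicate n ({0} : Multiset G)).sum = Multiset.replicate n 0 := by
  induction n with
  | zero => simp
  | succ m ih => simp [Multiset.replicate_succ, ih]

lemma map_sum_sum (l : Multiset (Multiset G)) (f : G → ℕ) :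
    ((l.sum).map f).sum = (l.map fun T => (T.map f).sum).sum := by
  induction l using Multiset.induction with
  | empty => simp
  | cons T l ih => simp [ih]

lemma le_sum_of_mem {l : Multiset (Multiset G)} {T : Multiset G} (h : T ∈ l) : T ≤ l.sum := by
  obtain ⟨l', rfl⟩ := Multiset.exists_cons_of_mem h
  rw [Multiset.sum_cons]
  exact Multiset.le_add_right _ _

lemma mem_msum {l : Multiset (Multiset G)} {a : G} (h : a ∈ l.sum) : ∃ T ∈ l, a ∈ T := by
  induction l using Multiset.induction with
  | empty => simp at h
  | cons T l ih =>
    rw [Multiset.sum_cons, Multiset.mem_add] at h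
    rcases h with h | h
    · exact ⟨T, Multiset.mem_cons_self _ _, h⟩
    · obtain ⟨T', hT', ha⟩ := ih h
      exact ⟨T', Multiset.mem_cons_of_mem hT', ha⟩

lemma eq_rep2 [DecidableEq G] (T : Multiset G) (u v : G) (huv : u ≠ v)
    (h : ∀ x ∈ T, x = u ∨ x = v) :
    T = Multiset.replicate (T.count u) u + Multiset.replicate (T.count v) v := by
  ext a
  simp only [Multiset.count_add, Multiset.count_replicate]
  by_cases hau : a = u
  · subst hau
    have h1 : v ≠ a := Ne.symm huv
    simp [h1]
  · by_cases hav : a = v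
    · subst hav; simp [Ne.symm hau]
    · have : a ∉ T := fun hm => by rcases h a hm with h | h <;> simp_all
      simp [Ne.symm hau, Ne.symm hav, Multiset.count_eq_zero_of_notMem this]

lemma eq_rep3 [DecidableEq G] (T : Multiset G) (u v w : G) (huv : u ≠ v) (huw : u ≠ w)
    (hvw : v ≠ w) (h : ∀ x ∈ T, x = u ∨ x = v ∨ x = w) :
    T = Multiset.replicate (T.count u) u + Multiset.replicate (T.count v) v
      + Multiset.replicate (T.count w) w := by
  ext a
  simp only [Multiset.count_add, Multiset.count_replicate]
  by_cases hau : a = u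
  · subst hau
    have h1 : v ≠ a := Ne.symm huv
    have h2 : w ≠ a := Ne.symm huw
    simp [h1, h2]
  · by_cases hav : a = v
    · subst hav
      have h2 : w ≠ a := Ne.symm hvw
      simp [Ne.symm hau, h2]
    · by_cases haw : a = w
      · subst haw; simp [Ne.symm hau, Ne.symm hav]
      · have : a ∉ T := fun hm => by rcases h a hm with h | h | h <;> simp_all
        simp [Ne.symm hau, Ne.symm hav, Ne.symm haw,
          Multiset.count_eq_zero_of_notMem this]

/-- Atoms containing `0` are exactly `{0}`. -/
lemma atom_of_zero_mem {T : Multiset G} (hT : IsMinZS T) (h0 : (0 : G) ∈ T) : T = {0} := by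
  by_contra hne
  exact hT.2.2 {0} ((Multiset.singleton_le).2 h0) (by simp) (fun h => hne h.symm) (by simp)

lemma isMinZS_zero_singleton : IsMinZS ({0} : Multiset G) := by
  refine ⟨by simp, by simp, fun T hle hne hneq => ?_⟩
  rcases Multiset.le_singleton.1 hle with rfl | rfl
  · exact absurd rfl hne
  · exact absurd rfl hneq

/-- Shifting by zeros. -/
lemma shift_mem (C : Multiset G) (h0 : (0 : G) ∉ C) (z n : ℕ) :
    n ∈ ZSLengths (Multiset.replicate z 0 + C) ↔ ∃ m ∈ ZSLengths C, n = z + m := by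
  classical
  constructor
  · rintro ⟨l, rfl, hatoms, hsum⟩
    set l0 := l.filter (fun T => (0:G) ∈ T) with hl0
    set l1 := l.filter (fun T => ¬ (0:G) ∈ T) with hl1
    have hsplit : l0 + l1 = l := Multiset.filter_add_not _ l
    have hl0rep : l0 = Multiset.replicate (Multiset.card l0) {0} := by
      rw [Multiset.eq_replicate_card]
      intro T hT
      have := Multiset.mem_filter.1 hT
      exact atom_of_zero_mem (hatoms T this.1) this.2
    have hsum0 : l0.sum = Multiset.replicate (Multiset.card l0) 0 := by
      rw [congrArg Multiset.sum hl0rep, sum_replicate_singleton]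
    have hzero_nmem : (0 : G) ∉ l1.sum := by
      intro hmem
      obtain ⟨T, hT, h0T⟩ := mem_msum hmem
      exact (Multiset.mem_filter.1 hT).2 h0T
    have hsums : l0.sum + l1.sum = Multiset.replicate z 0 + C := by
      rw [← hsum, ← hsplit, Multiset.sum_add]
    have hcard0 : Multiset.card l0 = z := by
      have := congrArg (Multiset.count (0 : G)) hsums
      simpa [hsum0, Multiset.count_eq_zero_of_notMem hzero_nmem,
        Multiset.count_eq_zero_of_notMem h0] using this
    have hsum1 : l1.sum = C := by
      rw [hsum0, hcard0] at hsums
      exact add_left_cancel hsums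
    refine ⟨Multiset.card l1, ⟨l1, rfl, fun T hT => hatoms T (Multiset.mem_of_le
      (Multiset.filter_le (fun T => ¬ (0:G) ∈ T) l) hT), hsum1⟩, ?_⟩
    rw [← hsplit, Multiset.card_add, hcard0]
  · rintro ⟨m, ⟨l, rfl, hatoms, hsum⟩, rfl⟩
    refine ⟨Multiset.replicate z ({0} : Multiset G) + l, by simp, ?_, ?_⟩
    · intro T hT
      rcases Multiset.mem_add.1 hT with hT | hT
      · rw [Multiset.eq_of_mem_replicate hT]; exact isMinZS_zero_singleton
      · exact hatoms T hT
    · rw [Multiset.sum_add, sum_replicate_singleton, hsum]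

lemma assemble (C : Multiset G) (h0 : (0 : G) ∉ C) (hsum : C.sum = 0) (m k y : ℕ)
    (hm : m ≤ 2 * k) (hL : ZSLengths C = Set.Icc m (m + k)) :
    ∃ B : Multiset G, B.sum = 0 ∧ ZSLengths B = Set.Icc (y + 2 * k) (y + 3 * k) := by
  refine ⟨Multiset.replicate (y + 2 * k - m) 0 + C, by simp [Multiset.sum_replicate, hsum], ?_⟩
  ext n
  constructor
  · intro hn
    obtain ⟨m', hm', rfl⟩ := (shift_mem C h0 _ n).1 hn
    rw [hL] at hm'
    simp only [Set.mem_Icc] at *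
    omega
  · intro hn
    simp only [Set.mem_Icc] at hn
    refine (shift_mem C h0 _ n).2 ⟨n - (y + 2 * k - m), ?_, by omega⟩
    rw [hL]
    simp only [Set.mem_Icc]
    omega

lemma wsum_const_one (T : Multiset G) : (T.map fun _ => (1:ℕ)).sum = Multiset.card T := by
  simp [Multiset.map_const']
lemma length_mul_le (l : Multiset (Multiset G)) (f : G → ℕ) (m : ℕ)
    (h : ∀ T ∈ l, m ≤ (T.map f).sum) : Multiset.card l * m ≤ ((l.sum).map f).sum := by
  rw [map_sum_sum]
  have := Multiset.card_nsmul_le_sum (s := l.map fun T => (T.map f).sum) (a := m)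
    (fun x hx => by obtain ⟨T, hT, rfl⟩ := Multiset.mem_map.1 hx; exact h T hT)
  simpa [smul_eq_mul] using this
lemma le_length_mul (l : Multiset (Multiset G)) (f : G → ℕ) (M : ℕ)
    (h : ∀ T ∈ l, (T.map f).sum ≤ M) : ((l.sum).map f).sum ≤ Multiset.card l * M := by
  rw [map_sum_sum]
  have := Multiset.sum_le_card_nsmul (l.map fun T => (T.map f).sum) M
    (fun x hx => by obtain ⟨T, hT, rfl⟩ := Multiset.mem_map.1 hx; exact h T hT)
  simpa [smul_eq_mul] using this
lemma two_le_card_atom {S T : Multiset G} (h0 : (0:G) ∉ S) (hle : T ≤ S) (hT : IsMinZS T) :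
    2 ≤ Multiset.card T := by
  rcases hT with ⟨hne, hsum, -⟩
  by_contra h
  interval_cases hc : Multiset.card T
  · exact hne (Multiset.card_eq_zero.1 hc)
  · obtain ⟨x, rfl⟩ := Multiset.card_eq_one.1 hc
    simp only [Multiset.sum_singleton] at hsum
    exact h0 (Multiset.mem_of_le hle (by simp [hsum]))

/-- Generic minimality criterion for multisets supported on two elements. -/
lemma isMinZS_rep2 (x z : G) (hxz : x ≠ z) (m c : ℕ) (hmc : m + c ≠ 0)
    (hsum : m • x + c • z = 0)
    (hmin : ∀ a b : ℕ, a ≤ m → b ≤ c → ¬(a = 0 ∧ b = 0) → ¬(a = m ∧ b = c) →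
      a • x + b • z ≠ 0) :
    IsMinZS (Multiset.replicate m x + Multiset.replicate c z) := by
  classical
  refine ⟨?_, by rw [Multiset.sum_add, Multiset.sum_replicate, Multiset.sum_replicate, hsum],
    fun T hle hne hneq => ?_⟩
  · intro h
    have := congrArg Multiset.card h
    simp at this
    omega
  · have hmem : ∀ y ∈ T, y = x ∨ y = z := by
      intro y hy
      have := Multiset.mem_of_le hle hy
      rcases Multiset.mem_add.1 this with h | h
      · exact Or.inl (Multiset.eq_of_mem_replicate h)
      · exact Or.inr (Multiset.eq_of_mem_replicate h)
    have hrep := eq_rep2 T x z hxz hmem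
    have hcnt := Multiset.le_iff_count.1 hle
    have hcx : T.count x ≤ m := by
      have := hcnt x
      simpa [Multiset.count_replicate, hxz, Ne.symm hxz] using this
    have hcz : T.count z ≤ c := by
      have := hcnt z
      simpa [Multiset.count_replicate, hxz, Ne.symm hxz] using this
    have hsumT : T.sum = T.count x • x + T.count z • z := by
      rw [congrArg Multiset.sum hrep, Multiset.sum_add, Multiset.sum_replicate,
        Multiset.sum_replicate]
    rw [hsumT]
    refine hmin _ _ hcx hcz ?_ ?_
    · rintro ⟨h1, h2⟩
      exact hne (by rw [hrep, h1, h2]; simp)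
    · rintro ⟨h1, h2⟩
      exact hneq (by rw [hrep, h1, h2])


lemma isMinZS_pair {x : G} (hx : x ≠ 0) (hxx : x + x = 0) :
    IsMinZS (Multiset.replicate 2 x) := by
  refine ⟨by simp, by simp [Multiset.sum_replicate, two_nsmul, hxx], fun T hle hne hneq => ?_⟩
  have hrep : T = Multiset.replicate (Multiset.card T) x :=
    Multiset.eq_replicate_card.2 fun b hb => Multiset.eq_of_mem_replicate
      (Multiset.mem_of_le hle hb)
  have hcle : Multiset.card T ≤ 2 := by
    have := Multiset.card_le_card hle; simpa using this
  interval_cases hc : Multiset.card T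
  · exact absurd (Multiset.card_eq_zero.1 hc) hne
  · rw [hrep]; simpa using hx
  · exact absurd hrep hneq

end ZSAux



open ZSAux Multiset in
lemma caseA (g : G) (d p α k : ℕ) (hd : 1 ≤ d) (hpdef : p = 2*d+1) (hprime : p.Prime)
    (hp : addOrderOf g = p) (hα : α = k/d + (if k % d = 0 then 0 else 1)) :
    ((0:G) ∉ (replicate (p*α) g + replicate (p*k) (g+g))) ∧
    (replicate (p*α) g + replicate (p*k) (g+g)).sum = 0 ∧
    ZSLengths (replicate (p*α) g + replicate (p*k) (g+g)) =
      Set.Icc (α+k) ((α+k)+k) := by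
  classical
  have hp3 : 3 ≤ p := by omega
  have hdvd : ∀ n : ℕ, p ∣ n ↔ n • g = 0 := by
    intro n
    rw [← hp]
    exact addOrderOf_dvd_iff_nsmul_eq_zero
  have hpg : p • g = 0 := (hdvd p).1 dvd_rfl
  have hg0 : g ≠ 0 := by
    intro h
    have : p ∣ 1 := (hdvd 1).2 (by simp [h])
    have := Nat.le_of_dvd one_pos this
    omega
  set w := g + g with hw
  have hsum2 : ∀ a b : ℕ, a • g + b • w = (a + 2*b) • g := by
    intro a b
    rw [hw, smul_add, show a + 2*b = a + b + b by ring, add_nsmul, add_nsmul, add_assoc]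
  have hw0 : w ≠ 0 := by
    intro h
    have h2 : (2:ℕ) • g = 0 := by rw [two_nsmul, ← hw, h]
    have := Nat.le_of_dvd two_pos ((hdvd 2).2 h2)
    omega
  have hgw : g ≠ w := by
    intro h
    apply hg0
    rw [hw] at h
    exact (right_eq_add.1 h)
  -- atoms
  have hAatom : ∀ a b : ℕ, a + 2*b = p →
      IsMinZS (Multiset.replicate a g + Multiset.replicate b w) := by
    intro a b hab
    refine isMinZS_rep2 g w hgw a b (by omega) ?_ ?_
    · rw [hsum2, hab, hpg]
    · intro a' b' ha' hb' h0 hfull heq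
      rw [hsum2] at heq
      have := Nat.le_of_dvd (by omega) ((hdvd _).2 heq)
      omega
  have hPatom : IsMinZS (Multiset.replicate 0 g + Multiset.replicate p w) := by
    refine isMinZS_rep2 g w hgw 0 p (by omega) ?_ ?_
    · rw [hsum2]
      exact (hdvd _).1 ⟨2, by ring⟩
    · intro a' b' ha' hb' h0 hfull heq
      rw [hsum2] at heq
      have ha0 : a' = 0 := by omega
      have hdb : p ∣ 2 * b' := by
        have h1 := (hdvd _).2 heq
        rwa [ha0, zero_add] at h1
      rcases (Nat.Prime.dvd_mul hprime).1 hdb with h2 | hb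
      · have := Nat.le_of_dvd two_pos h2
        omega
      · rcases Nat.lt_or_ge b' p with hlt | hge
        · have hb0 : b' = 0 := by
            rcases Nat.eq_zero_or_pos b' with h | h
            · exact h
            · exact absurd (Nat.le_of_dvd h hb) (by omega)
          omega
        · omega
  set C : Multiset G := replicate (p*α) g + replicate (p*k) w with hC
  have hmemC : ∀ x ∈ C, x = g ∨ x = w := by
    intro x hx
    rcases mem_add.1 hx with hx | hx
    · exact Or.inl (eq_of_mem_replicate hx)
    · exact Or.inr (eq_of_mem_replicate hx)
  have h0C : (0:G) ∉ C := by
    intro h; rcases hmemC 0 h with h|h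
    exacts [hg0 h.symm, hw0 h.symm]
  have hCsum : C.sum = 0 := by
    simp only [hC, Multiset.sum_add, sum_replicate]
    rw [hsum2]
    exact (hdvd _).1 ⟨α + 2*k, by ring⟩
  refine ⟨h0C, hCsum, ?_⟩
  set f : G → ℕ := fun x => if x = w then 2 else 1 with hf
  have hfg : f g = 1 := by simp [hf, hgw]
  have hfw : f w = 2 := by simp [hf]
  have hwC : ((C.map f).sum) = p*α + 2*(p*k) := by
    simp only [hC, Multiset.map_add, Multiset.map_replicate, Multiset.sum_add,
      sum_replicate, hfg, hfw, smul_eq_mul]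
    ring
  have hcardC : Multiset.card C = p*α + p*k := by simp [hC]
  ext n
  constructor
  · rintro ⟨l, rfl, hatoms, hsum⟩
    have hbounds : ∀ T ∈ l, (p ≤ (T.map f).sum ∧ (T.map f).sum ≤ 2 * Multiset.card T)
        ∧ Multiset.card T ≤ p := by
      intro T hT
      have hTle : T ≤ C := hsum ▸ Multiset.le_sum_of_mem hT
      have hTmem : ∀ x ∈ T, x = g ∨ x = w :=
        fun x hx => hmemC x (mem_of_le hTle hx)
      have hrep := eq_rep2 T g w hgw hTmem
      have hwT : (T.map f).sum = T.count g + 2 * T.count w := by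
        rw [congrArg (fun s => (Multiset.map f s).sum) hrep]
        simp only [Multiset.map_add, Multiset.map_replicate, Multiset.sum_add,
          sum_replicate, hfg, hfw, smul_eq_mul]
        ring
      have hcardT : Multiset.card T = T.count g + T.count w := by
        rw [congrArg Multiset.card hrep]
        simp
      have hsumT : T.sum = (T.count g + 2 * T.count w) • g := by
        rw [congrArg Multiset.sum hrep, Multiset.sum_add, sum_replicate, sum_replicate,
          hsum2]
      have hTzero := (hatoms T hT).2.1
      rw [hsumT] at hTzero
      have hdvdT : p ∣ T.count g + 2 * T.count w := (hdvd _).2 hTzero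
      have hTne := (hatoms T hT).1
      have hTpos : 1 ≤ T.count g + T.count w := by
        by_contra hc
        push_neg at hc
        apply hTne
        rw [hrep]
        have h1 : T.count g = 0 := by omega
        have h2 : T.count w = 0 := by omega
        rw [h1, h2]
        simp
      have hwlow : p ≤ (T.map f).sum := by
        rw [hwT]
        exact Nat.le_of_dvd (by omega) hdvdT
      refine ⟨⟨hwlow, by omega⟩, ?_⟩
      -- card T ≤ p
      by_contra hbig
      push_neg at hbig
      rw [hcardT] at hbig
      -- find proper zero-sum submultiset
      have key : ∀ a b : ℕ, a ≤ T.count g → b ≤ T.count w → a + 2*b = p ∨ (a = 0 ∧ b = p) →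
          False := by
        intro a b ha hb hcase
        have hsub : Multiset.replicate a g + Multiset.replicate b w ≤ T := by
          rw [hrep]
          exact add_le_add ((Multiset.replicate_le_replicate g).2 ha)
            ((Multiset.replicate_le_replicate w).2 hb)
        have hne0 : Multiset.replicate a g + Multiset.replicate b w ≠ 0 := by
          intro h
          have := congrArg Multiset.card h
          simp at this
          omega
        have hneT : Multiset.replicate a g + Multiset.replicate b w ≠ T := by
          intro h
          have h1 := congrArg (Multiset.count g) h
          have h2 := congrArg (Multiset.count w) h
          simp [count_replicate, hgw, Ne.symm hgw] at h1 h2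
          omega
        refine (hatoms T hT).2.2 _ hsub hne0 hneT ?_
        rw [Multiset.sum_add, sum_replicate, sum_replicate, hsum2]
        refine (hdvd _).1 ?_
        rcases hcase with h | ⟨h1, h2⟩
        · rw [h]
        · rw [h1, h2]
          exact ⟨2, by ring⟩
      rcases Nat.lt_or_ge (T.count w) p with hjp | hjp
      · rcases Nat.eq_zero_or_pos (T.count g) with hi0 | hi1
        · omega
        · rcases Nat.lt_or_ge (T.count w) d with hjd | hjd
          · exact key (p - 2*(T.count w)) (T.count w) (by omega) le_rfl (Or.inl (by omega))
          · exact key 1 d hi1 hjd (Or.inl (by omega))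
      · exact key 0 p (by omega) hjp (Or.inr ⟨rfl, rfl⟩)
    -- combine
    have upper : Multiset.card l * p ≤ p*α + 2*(p*k) := by
      have := length_mul_le l f p (fun T hT => (hbounds T hT).1.1)
      rwa [hsum, hwC] at this
    have lower : p*α + p*k ≤ Multiset.card l * p := by
      have h1 : ∀ T ∈ l, (T.map fun _ => (1:ℕ)).sum ≤ p := by
        intro T hT
        rw [wsum_const_one]
        exact (hbounds T hT).2
      have := le_length_mul l (fun _ => 1) p h1
      rwa [hsum, wsum_const_one, hcardC] at this
    have hppos : 0 < p := by omega
    simp only [Set.mem_Icc]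
    constructor
    · have : (α + k) * p ≤ Multiset.card l * p := by
        calc (α+k)*p = p*α + p*k := by ring
        _ ≤ Multiset.card l * p := lower
      exact Nat.le_of_mul_le_mul_right this hppos
    · have : Multiset.card l * p ≤ (α + k + k) * p := by
        calc Multiset.card l * p ≤ p*α + 2*(p*k) := upper
        _ = (α+k+k)*p := by ring
      exact Nat.le_of_mul_le_mul_right this hppos
  · intro hn
    simp only [Set.mem_Icc] at hn
    obtain ⟨s, hns⟩ : ∃ s, n = α + k + s := ⟨n - (α+k), by omega⟩
    have hsk : s ≤ k := by omega
    obtain ⟨m, hm⟩ : ∃ m, k = s + m := ⟨k - s, by omega⟩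
    set q := s / d with hq
    set r := s % d with hr
    have hdq : d * q + r = s := Nat.div_add_mod s d
    have hrd : r < d := Nat.mod_lt _ (by omega)
    have hq2 : q ≤ k / d := by
      rw [hq]
      exact Nat.div_le_div_right hsk
    -- atoms used
    have hA0 : IsMinZS (Multiset.replicate p g + Multiset.replicate 0 w) :=
      hAatom p 0 (by omega)
    have hAd : IsMinZS (Multiset.replicate 1 g + Multiset.replicate d w) :=
      hAatom 1 d (by omega)
    by_cases hr0 : r = 0
    · -- need q ≤ α
      have hqα : q ≤ α := by
        rw [hα]
        split_ifs with h
        · omega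
        · omega
      obtain ⟨β, hβ⟩ : ∃ β, α = q + β := ⟨α - q, by omega⟩
      refine ⟨replicate m (Multiset.replicate 0 g + Multiset.replicate p w)
        + replicate (2*s+q) (Multiset.replicate 1 g + Multiset.replicate d w)
        + replicate β (Multiset.replicate p g + Multiset.replicate 0 w), ?_, ?_, ?_⟩
      · simp only [Multiset.card_add, card_replicate]
        omega
      · intro T hT
        rcases mem_add.1 hT with hT | hT
        · rcases mem_add.1 hT with hT | hT
          · rw [eq_of_mem_replicate hT]; exact hPatom
          · rw [eq_of_mem_replicate hT]; exact hAd
        · rw [eq_of_mem_replicate hT]; exact hA0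
      · ext x
        simp only [Multiset.sum_add, sum_replicate, hC, count_add, count_nsmul,
          count_replicate]
        by_cases hxg : x = g
        · subst hxg
          simp [count_replicate, hgw, Ne.symm hgw]
          -- (2*s+q)*1 + β*p = p*α  with s = d*q, α = q + β
          zify
          have hsz : (d:ℤ) * q = s := by
            have : d * q = s := by omega
            exact_mod_cast this
          have hαz : (α:ℤ) = q + β := by exact_mod_cast hβ
          have hpz' : (p:ℤ) = 2*d+1 := by exact_mod_cast hpdef
          rw [hαz, hpz', ← hsz]
          ring
        · by_cases hxw : x = w
          · subst hxw
            simp [count_replicate, hgw, Ne.symm hgw]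
            -- m*p + (2*s+q)*d = p*k with k = s+m, d*q = s
            zify
            have hsz : (d:ℤ) * q = s := by
              have : d * q = s := by omega
              exact_mod_cast this
            have hkz : (k:ℤ) = s + m := by exact_mod_cast hm
            have hpz' : (p:ℤ) = 2*d+1 := by exact_mod_cast hpdef
            rw [hkz, hpz', ← hsz]
            ring
          · simp [count_replicate, hxg, hxw, Ne.symm hxg, Ne.symm hxw]
    · have hqα : q + 1 ≤ α := by
        rw [hα]
        split_ifs with h
        · -- k % d = 0 : show q < k/d
          rcases Nat.lt_or_ge q (k/d) with h1 | h1
          · omega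
          · exfalso
            have hqe : q = k / d := by omega
            have hkd : d * (k/d) = k := Nat.mul_div_cancel' (Nat.dvd_of_mod_eq_zero h)
            have : s = k + r := by
              rw [← hdq, hqe, hkd]
            omega
        · omega
      obtain ⟨β, hβ⟩ : ∃ β, α = q + 1 + β := ⟨α - q - 1, by omega⟩
      have hAr : IsMinZS (Multiset.replicate (p - 2*r) g + Multiset.replicate r w) :=
        hAatom (p - 2*r) r (by omega)
      refine ⟨replicate m (Multiset.replicate 0 g + Multiset.replicate p w)
        + replicate (2*s+q) (Multiset.replicate 1 g + Multiset.replicate d w)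
        + replicate 1 (Multiset.replicate (p - 2*r) g + Multiset.replicate r w)
        + replicate β (Multiset.replicate p g + Multiset.replicate 0 w), ?_, ?_, ?_⟩
      · simp only [Multiset.card_add, card_replicate]
        omega
      · intro T hT
        rcases mem_add.1 hT with hT | hT
        · rcases mem_add.1 hT with hT | hT
          · rcases mem_add.1 hT with hT | hT
            · rw [eq_of_mem_replicate hT]; exact hPatom
            · rw [eq_of_mem_replicate hT]; exact hAd
          · rw [eq_of_mem_replicate hT]; exact hAr
        · rw [eq_of_mem_replicate hT]; exact hA0
      · ext x
        simp only [Multiset.sum_add, sum_replicate, hC, count_add, count_nsmul,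
          count_replicate]
        by_cases hxg : x = g
        · subst hxg
          simp [count_replicate, hgw, Ne.symm hgw]
          -- (2*s+q)*1 + (p-2*r) + β*p = p*α, α = q+1+β, d*q+r = s, p = 2d+1
          zify [show 2*r ≤ p by omega]
          have hsz : (d:ℤ) * q + r = s := by exact_mod_cast hdq
          have hαz : (α:ℤ) = q + 1 + β := by exact_mod_cast hβ
          have hpz' : (p:ℤ) = 2*d+1 := by exact_mod_cast hpdef
          rw [hαz, hpz', ← hsz]
          ring
        · by_cases hxw : x = w
          · subst hxw
            simp [count_replicate, hgw, Ne.symm hgw]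
            -- m*p + (2*s+q)*d + r = p*k , k = s+m, d*q+r=s
            zify
            have hsz : (d:ℤ) * q + r = s := by exact_mod_cast hdq
            have hkz : (k:ℤ) = s + m := by exact_mod_cast hm
            have hpz' : (p:ℤ) = 2*d+1 := by exact_mod_cast hpdef
            rw [hkz, hpz', ← hsz]
            ring
          · simp [count_replicate, hxg, hxw, Ne.symm hxg, Ne.symm hxw]


open ZSAux Multiset in
lemma caseB (a b : G) (ha : addOrderOf a = 2) (hb : addOrderOf b = 2) (hab : a ≠ b) (k : ℕ) :
    ((0:G) ∉ (replicate (2*k) a + replicate (2*k) b + replicate (2*k) (a+b))) ∧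
    (replicate (2*k) a + replicate (2*k) b + replicate (2*k) (a+b)).sum = 0 ∧
    ZSLengths (replicate (2*k) a + replicate (2*k) b + replicate (2*k) (a+b)) =
      Set.Icc (2*k) (2*k+k) := by
  classical
  have haa : a + a = 0 := by
    have : (2:ℕ) • a = 0 := addOrderOf_dvd_iff_nsmul_eq_zero.1 (ha ▸ dvd_refl _)
    simpa [two_nsmul] using this
  have hbb : b + b = 0 := by
    have : (2:ℕ) • b = 0 := addOrderOf_dvd_iff_nsmul_eq_zero.1 (hb ▸ dvd_refl _)
    simpa [two_nsmul] using this
  have ha0 : a ≠ 0 := by intro h; rw [h] at ha; simp at ha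
  have hb0 : b ≠ 0 := by intro h; rw [h] at hb; simp at hb
  set e := a + b with he
  have hee : e + e = 0 := by
    have h1 : e + e = (a + a) + (b + b) := by rw [he]; abel
    rw [h1, haa, hbb, add_zero]
  have he0 : e ≠ 0 := by
    intro h
    apply hab
    have h1 : b = -a := by rw [eq_neg_iff_add_eq_zero, add_comm]; exact he ▸ h
    rw [h1, neg_eq_iff_add_eq_zero.2 haa]
  have hae : a ≠ e := fun h => hb0 (by rwa [he, left_eq_add] at h)
  have hbe : b ≠ e := fun h => ha0 (by rw [he, add_comm] at h; rwa [left_eq_add] at h)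
  have hA : a + e = b := by rw [he, ← add_assoc, haa, zero_add]
  have hB : b + e = a := by
    rw [he]
    have : b + (a + b) = a + (b + b) := by abel
    rw [this, hbb, add_zero]
  set C : Multiset G := replicate (2*k) a + replicate (2*k) b + replicate (2*k) e with hC
  have hmemC : ∀ x ∈ C, x = a ∨ x = b ∨ x = e := by
    intro x hx
    rcases mem_add.1 hx with hx | hx
    · rcases mem_add.1 hx with hx | hx
      · exact Or.inl (eq_of_mem_replicate hx)
      · exact Or.inr (Or.inl (eq_of_mem_replicate hx))
    · exact Or.inr (Or.inr (eq_of_mem_replicate hx))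
  have h0C : (0:G) ∉ C := by
    intro h; rcases hmemC 0 h with h|h|h
    exacts [ha0 h.symm, hb0 h.symm, he0 h.symm]
  have hCsum : C.sum = 0 := by
    have hca : (2*k) • a = 0 := by
      rw [show 2*k = k+k by ring, add_nsmul, ← smul_add, haa, smul_zero]
    have hcb : (2*k) • b = 0 := by
      rw [show 2*k = k+k by ring, add_nsmul, ← smul_add, hbb, smul_zero]
    have hce : (2*k) • e = 0 := by
      rw [show 2*k = k+k by ring, add_nsmul, ← smul_add, hee, smul_zero]
    simp [hC, sum_replicate, hca, hcb, hce]
  refine ⟨h0C, hCsum, ?_⟩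
  have hWlit : ({a, b, e} : Multiset G) =
      replicate 1 a + replicate 1 b + replicate 1 e := by
    simp [replicate_one, Multiset.singleton_add]
  have hWmin : IsMinZS ({a, b, e} : Multiset G) := by
    refine ⟨by simp, ?_, ?_⟩
    · show a + (b + (e + 0)) = 0
      have h1 : a + (b + (e + 0)) = (a + b) + e := by abel
      rw [h1, ← he, hee]
    · intro T hle hne hneq
      have hTmem : ∀ x ∈ T, x = a ∨ x = b ∨ x = e := by
        intro x hx
        have := mem_of_le hle hx
        simp only [insert_eq_cons, mem_cons, mem_singleton] at this
        tauto
      have hcnt := le_iff_count.1 hle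
      have hca : T.count a ≤ 1 := by
        have := hcnt a
        simpa [count_cons, count_singleton, hab, hae] using this
      have hcb : T.count b ≤ 1 := by
        have := hcnt b
        simpa [count_cons, count_singleton, Ne.symm hab, hbe] using this
      have hce : T.count e ≤ 1 := by
        have := hcnt e
        simpa [count_cons, count_singleton, Ne.symm hae, Ne.symm hbe] using this
      have hrep := eq_rep3 T a b e hab hae hbe hTmem
      set i := T.count a with hi
      set j := T.count b with hj
      set m := T.count e with hm
      interval_cases i <;> interval_cases j <;> interval_cases m <;>
        simp only [replicate_zero, replicate_one, zero_add, add_zero] at hrep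
      · exact absurd (by simpa using hrep) hne
      · rw [hrep]; simpa using he0
      · rw [hrep]; simpa using hb0
      · rw [hrep]
        simp only [Multiset.singleton_add, Multiset.sum_cons, Multiset.sum_singleton]
        rw [hB]; exact ha0
      · rw [hrep]; simpa using ha0
      · rw [hrep]
        simp only [Multiset.singleton_add, Multiset.sum_cons, Multiset.sum_singleton]
        rw [hA]; exact hb0
      · rw [hrep]
        simp only [Multiset.singleton_add, Multiset.sum_cons, Multiset.sum_singleton]
        rw [← he]; exact he0
      · exact absurd (by rw [hrep, hWlit]; simp [replicate_one]) hneq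
  ext n
  constructor
  · rintro ⟨l, rfl, hatoms, hsum⟩
    have hcardC : Multiset.card C = 6 * k := by simp [hC]; ring
    have upper : Multiset.card l * 2 ≤ 6 * k := by
      have h2 : ∀ T ∈ l, 2 ≤ (T.map fun _ => (1:ℕ)).sum := by
        intro T hT
        rw [wsum_const_one]
        exact two_le_card_atom h0C (hsum ▸ Multiset.le_sum_of_mem hT) (hatoms T hT)
      have := length_mul_le l (fun _ => 1) 2 h2
      rwa [hsum, wsum_const_one, hcardC] at this
    have lower : 6 * k ≤ Multiset.card l * 3 := by
      have h3 : ∀ T ∈ l, (T.map fun _ => (1:ℕ)).sum ≤ 3 := by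
        intro T hT
        rw [wsum_const_one]
        by_contra hc4
        push_neg at hc4
        have hTle : T ≤ C := hsum ▸ Multiset.le_sum_of_mem hT
        have hTmem : ∀ x ∈ T, x = a ∨ x = b ∨ x = e :=
          fun x hx => hmemC x (mem_of_le hTle hx)
        have hrep := eq_rep3 T a b e hab hae hbe hTmem
        have hbig : 2 ≤ T.count a ∨ 2 ≤ T.count b ∨ 2 ≤ T.count e := by
          by_contra hsmall
          push_neg at hsmall
          have := congrArg Multiset.card hrep
          simp [card_replicate] at this
          omega
        obtain ⟨x, hx2, hxx⟩ : ∃ x, 2 ≤ T.count x ∧ x + x = 0 := by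
          rcases hbig with h|h|h
          exacts [⟨a, h, haa⟩, ⟨b, h, hbb⟩, ⟨e, h, hee⟩]
        have hsub : (replicate 2 x : Multiset G) ≤ T := by
          rw [le_iff_count]
          intro y
          by_cases hy : y = x
          · subst hy; simpa using hx2
          · simp [count_replicate, hy]
        have hne2 : (replicate 2 x : Multiset G) ≠ T := by
          intro h
          have := congrArg Multiset.card h
          simp at this
          omega
        exact (hatoms T hT).2.2 _ hsub (by simp) hne2
          (by simp [sum_replicate, two_nsmul, hxx])
      have := le_length_mul l (fun _ => 1) 3 h3
      rwa [hsum, wsum_const_one, hcardC] at this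
    simp only [Set.mem_Icc]
    omega
  · intro hn
    simp only [Set.mem_Icc] at hn
    refine ⟨replicate (2*(3*k-n)) ({a,b,e} : Multiset G)
      + replicate (k-(3*k-n)) (replicate 2 a)
      + replicate (k-(3*k-n)) (replicate 2 b)
      + replicate (k-(3*k-n)) (replicate 2 e), ?_, ?_, ?_⟩
    · simp only [Multiset.card_add, card_replicate]
      omega
    · intro T hT
      rcases mem_add.1 hT with hT | hT
      · rcases mem_add.1 hT with hT | hT
        · rcases mem_add.1 hT with hT | hT
          · rw [eq_of_mem_replicate hT]; exact hWmin
          · rw [eq_of_mem_replicate hT]; exact isMinZS_pair ha0 haa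
        · rw [eq_of_mem_replicate hT]; exact isMinZS_pair hb0 hbb
      · rw [eq_of_mem_replicate hT]; exact isMinZS_pair he0 hee
    · simp only [Multiset.sum_add, sum_replicate]
      ext x
      simp only [hC, count_add, count_nsmul, count_replicate]
      by_cases hxa : x = a
      · subst hxa
        rw [hWlit]
        simp [count_replicate, hab, hae, Ne.symm hab, Ne.symm hae, hbe, Ne.symm hbe]
        omega
      · by_cases hxb : x = b
        · subst hxb
          rw [hWlit]
          simp [count_replicate, hab, hae, Ne.symm hab, Ne.symm hae, hbe, Ne.symm hbe, hxa]
          omega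
        · by_cases hxe : x = e
          · subst hxe
            rw [hWlit]
            simp [count_replicate, hab, hae, Ne.symm hab, Ne.symm hae, hbe, Ne.symm hbe,
              hxa, hxb]
            omega
          · rw [hWlit]
            simp [count_replicate, hxa, hxb, hxe, Ne.symm hxa, Ne.symm hxb, Ne.symm hxe]


open ZSAux Multiset in
lemma caseC (g : G) (hg : addOrderOf g = 4) (k : ℕ) :
    ((0:G) ∉ (replicate (2*k) g + replicate (2*k) (-g) + replicate (2*k) (g+g))) ∧
    (replicate (2*k) g + replicate (2*k) (-g) + replicate (2*k) (g+g)).sum = 0 ∧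
    ZSLengths (replicate (2*k) g + replicate (2*k) (-g) + replicate (2*k) (g+g)) =
      Set.Icc (2*k) (2*k+k) := by
  classical
  have h4 : (4:ℕ) • g = 0 := addOrderOf_dvd_iff_nsmul_eq_zero.1 (hg ▸ dvd_refl _)
  have hnd : ∀ n : ℕ, 0 < n → n < 4 → (n:ℕ) • g ≠ 0 := by
    intro n hn hn4 h
    have hdvd := addOrderOf_dvd_iff_nsmul_eq_zero.2 h
    rw [hg] at hdvd
    have := Nat.le_of_dvd hn hdvd
    omega
  have hg0 : g ≠ 0 := by simpa using hnd 1 (by norm_num) (by norm_num)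
  set v := -g with hv
  set w := g + g with hw
  have hw0 : w ≠ 0 := by
    have := hnd 2 (by norm_num) (by norm_num)
    rw [two_nsmul] at this
    exact this
  have hv0 : v ≠ 0 := by simp [hv, hg0]
  have hgv : g ≠ v := by
    intro h
    apply hw0
    rw [hw]
    nth_rewrite 2 [h]
    simp [hv]
  have hgw : g ≠ w := by
    intro h
    apply hg0
    rw [hw] at h
    exact (right_eq_add.1 h)
  have hvw : v ≠ w := by
    intro h
    refine hnd 3 (by norm_num) (by norm_num) ?_
    have h3 : (3:ℕ) • g = w + g := by rw [hw]; abel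
    rw [h3, ← h, hv]
    simp
  -- group facts
  have hgvsum : g + v = 0 := by rw [hv]; simp
  have hww : w + w = 0 := by
    have : w + w = (4:ℕ) • g := by rw [hw]; abel
    rw [this, h4]
  have hggw : g + g + w = 0 := by rw [← hw]; exact hww
  have hvv : v + v = -w := by rw [hv, hw]; abel
  have hvvw : v + v + w = 0 := by rw [hvv]; simp
  have hgwne : g + w ≠ 0 := by
    intro h
    refine hnd 3 (by norm_num) (by norm_num) ?_
    have h3 : (3:ℕ) • g = g + w := by rw [hw]; abel
    rw [h3, h]
  have hvwne : v + w ≠ 0 := by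
    intro h
    apply hg0
    have : v + w = g := by rw [hv, hw]; abel
    rw [← this, h]
  have h4v : (4:ℕ) • v = 0 := by
    rw [hv, smul_neg, h4, neg_zero]
  have hv3 : v + (v + v) ≠ 0 := by
    intro h
    apply hg0
    have : v + (v + v) = -((3:ℕ) • g) := by rw [hv]; abel
    rw [this, neg_eq_zero] at h
    have h3 : (3:ℕ) • g = g + w := by rw [hw]; abel
    rw [h3] at h
    exact absurd h hgwne
  have hg3 : g + (g + g) ≠ 0 := by
    intro h
    apply hgwne
    have : g + w = g + (g + g) := by rw [hw]
    rw [this, h]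
  -- the six atoms
  have hP1 : IsMinZS (replicate 1 g + replicate 1 v) := by
    refine isMinZS_rep2 g v hgv 1 1 (by norm_num) (by simpa using hgvsum) ?_
    intro a b ha hb h0 hfull
    interval_cases a <;> interval_cases b <;> simp_all
  have hP2 : IsMinZS (replicate 0 g + replicate 2 w) := by
    refine isMinZS_rep2 g w hgw 0 2 (by norm_num) (by simpa [two_nsmul] using hww) ?_
    intro a b ha hb h0 hfull
    interval_cases a <;> interval_cases b <;> simp_all [two_nsmul]
  have hT1 : IsMinZS (replicate 2 g + replicate 1 w) := by
    refine isMinZS_rep2 g w hgw 2 1 (by norm_num) (by simpa [two_nsmul] using hggw) ?_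
    intro a b ha hb h0 hfull
    interval_cases a <;> interval_cases b <;>
      simp_all [two_nsmul] <;> first | exact hgwne | skip
  have hT2 : IsMinZS (replicate 2 v + replicate 1 w) := by
    refine isMinZS_rep2 v w hvw 2 1 (by norm_num) (by simpa [two_nsmul] using hvvw) ?_
    intro a b ha hb h0 hfull
    interval_cases a <;> interval_cases b <;>
      simp_all [two_nsmul, hvv] <;> first | exact hvwne | (intro h; apply hw0; rw [← neg_add, neg_eq_zero] at h; exact h) | skip
  set C : Multiset G := replicate (2*k) g + replicate (2*k) v + replicate (2*k) w with hC
  have hmemC : ∀ x ∈ C, x = g ∨ x = v ∨ x = w := by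
    intro x hx
    rcases mem_add.1 hx with hx | hx
    · rcases mem_add.1 hx with hx | hx
      · exact Or.inl (eq_of_mem_replicate hx)
      · exact Or.inr (Or.inl (eq_of_mem_replicate hx))
    · exact Or.inr (Or.inr (eq_of_mem_replicate hx))
  have h0C : (0:G) ∉ C := by
    intro h; rcases hmemC 0 h with h|h|h
    exacts [hg0 h.symm, hv0 h.symm, hw0 h.symm]
  have hCsum : C.sum = 0 := by
    simp only [hC, Multiset.sum_add, sum_replicate]
    have e1 : (2*k) • g + (2*k) • v = 0 := by
      rw [← smul_add, hgvsum, smul_zero]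
    have e2 : (2*k) • w = 0 := by
      rw [show 2*k = k + k by ring, add_nsmul, ← smul_add, hww, smul_zero]
    rw [e1, e2, add_zero]
  refine ⟨h0C, hCsum, ?_⟩
  -- the weight function
  set f : G → ℕ := fun x => if x = w then 2 else 1 with hf
  have hfg : f g = 1 := by simp [hf, hgw]
  have hfv : f v = 1 := by simp [hf, hvw]
  have hfw : f w = 2 := by simp [hf]
  have hwC : ((C.map f).sum) = 8 * k := by
    simp only [hC, Multiset.map_add, Multiset.map_replicate, Multiset.sum_add,
      sum_replicate, hfg, hfv, hfw, smul_eq_mul]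
    ring
  ext n
  constructor
  · rintro ⟨l, rfl, hatoms, hsum⟩
    have hcardC : Multiset.card C = 6 * k := by simp [hC]; ring
    have upper : Multiset.card l * 2 ≤ 6 * k := by
      have h2 : ∀ T ∈ l, 2 ≤ (T.map fun _ => (1:ℕ)).sum := by
        intro T hT
        rw [wsum_const_one]
        exact two_le_card_atom h0C (hsum ▸ Multiset.le_sum_of_mem hT) (hatoms T hT)
      have := length_mul_le l (fun _ => 1) 2 h2
      rwa [hsum, wsum_const_one, hcardC] at this
    have lower : 8 * k ≤ Multiset.card l * 4 := by
      have h3 : ∀ T ∈ l, (T.map f).sum ≤ 4 := by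
        intro T hT
        by_contra hc5
        push_neg at hc5
        have hTle : T ≤ C := hsum ▸ Multiset.le_sum_of_mem hT
        have hTmem : ∀ x ∈ T, x = g ∨ x = v ∨ x = w :=
          fun x hx => hmemC x (mem_of_le hTle hx)
        have hrep := eq_rep3 T g v w hgv hgw hvw hTmem
        have hwT : (T.map f).sum = T.count g + T.count v + 2 * T.count w := by
          rw [congrArg (fun s => (Multiset.map f s).sum) hrep]
          simp only [Multiset.map_add, Multiset.map_replicate, Multiset.sum_add,
            sum_replicate, hfg, hfv, hfw, smul_eq_mul]
          ring
        rw [hwT] at hc5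
        -- find a proper zero-sum sub-multiset
        have key : ∀ i' j' c' : ℕ, i' ≤ T.count g → j' ≤ T.count v → c' ≤ T.count w →
            i' + j' + 2*c' ≠ 0 →
            i' + j' + 2*c' ≤ 4 →
            (i' : ℕ) • g + (j' : ℕ) • v + (c' : ℕ) • w ≠ 0 := by
          intro i' j' c' hi' hj' hc' hpos hle4 hzero
          set T' : Multiset G := replicate i' g + replicate j' v + replicate c' w with hT'
          have hsub : T' ≤ T := by
            rw [hrep, hT']
            exact add_le_add (add_le_add ((Multiset.replicate_le_replicate g).2 hi')
              ((Multiset.replicate_le_replicate v).2 hj'))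
              ((Multiset.replicate_le_replicate w).2 hc')
          have hne0 : T' ≠ 0 := by
            intro h
            have := congrArg Multiset.card h
            simp [hT'] at this
            omega
          have hneT : T' ≠ T := by
            intro h
            have h1 := congrArg (Multiset.count g) h
            have h2 := congrArg (Multiset.count v) h
            have h3 := congrArg (Multiset.count w) h
            rw [hT'] at h1 h2 h3
            simp [count_replicate, hgv, hgw, hvw, Ne.symm hgv, Ne.symm hgw,
              Ne.symm hvw] at h1 h2 h3
            omega
          refine (hatoms T hT).2.2 T' hsub hne0 hneT ?_
          rw [hT']
          simp only [Multiset.sum_add, sum_replicate]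
          exact hzero
        -- case analysis
        by_cases hcase1 : 2 ≤ T.count w
        · exact key 0 0 2 (by omega) (by omega) hcase1 (by omega) (by omega)
            (by simpa [two_nsmul] using hww)
        by_cases hcase2 : 1 ≤ T.count g ∧ 1 ≤ T.count v
        · exact key 1 1 0 hcase2.1 hcase2.2 (by omega) (by omega) (by omega)
            (by simpa using hgvsum)
        by_cases hcase3 : 2 ≤ T.count g ∧ 1 ≤ T.count w
        · exact key 2 0 1 hcase3.1 (by omega) hcase3.2 (by omega) (by omega)
            (by simpa [two_nsmul] using hggw)
        by_cases hcase4 : 2 ≤ T.count v ∧ 1 ≤ T.count w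
        · exact key 0 2 1 (by omega) hcase4.1 hcase4.2 (by omega) (by omega)
            (by simpa [two_nsmul] using hvvw)
        by_cases hcase5 : 4 ≤ T.count g
        · refine key 4 0 0 hcase5 (by omega) (by omega) (by omega) (by omega) ?_
          simpa using h4
        by_cases hcase6 : 4 ≤ T.count v
        · refine key 0 4 0 (by omega) hcase6 (by omega) (by omega) (by omega) ?_
          simpa using h4v
        · omega
      have := le_length_mul l f 4 h3
      rwa [hsum, hwC] at this
    simp only [Set.mem_Icc]
    omega
  · intro hn
    simp only [Set.mem_Icc] at hn
    set q := 3*k - n with hq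
    refine ⟨replicate (2*k-2*q) (replicate 1 g + replicate 1 v)
      + replicate (k-q) (replicate 0 g + replicate 2 w)
      + replicate q (replicate 2 g + replicate 1 w)
      + replicate q (replicate 2 v + replicate 1 w), ?_, ?_, ?_⟩
    · simp only [Multiset.card_add, card_replicate]
      omega
    · intro T hT
      rcases mem_add.1 hT with hT | hT
      · rcases mem_add.1 hT with hT | hT
        · rcases mem_add.1 hT with hT | hT
          · rw [eq_of_mem_replicate hT]; exact hP1
          · rw [eq_of_mem_replicate hT]; exact hP2
        · rw [eq_of_mem_replicate hT]; exact hT1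
      · rw [eq_of_mem_replicate hT]; exact hT2
    · ext x
      simp only [Multiset.sum_add, sum_replicate, hC, count_add, count_nsmul,
        count_replicate]
      by_cases hxg : x = g
      · subst hxg
        simp [count_replicate, hgv, hgw, hvw, Ne.symm hgv, Ne.symm hgw, Ne.symm hvw]
        omega
      · by_cases hxv : x = v
        · subst hxv
          simp [count_replicate, hgv, hgw, hvw, Ne.symm hgv, Ne.symm hgw, Ne.symm hvw]
          omega
        · by_cases hxw : x = w
          · subst hxw
            simp [count_replicate, hgv, hgw, hvw, Ne.symm hgv, Ne.symm hgw, Ne.symm hvw]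
            omega
          · simp [count_replicate, hxg, hxv, hxw, Ne.symm hxg, Ne.symm hxv, Ne.symm hxw]

open ZSAux in
/-- Let `G` be a finite abelian group with `|G| ≥ 3` containing an element of order 4, or two
independent elements of order 2, or an element of odd prime order. Then for all `y, k ∈ ℕ₀`
the shifted interval `y + [2k, 3k]` belongs to the system of sets of lengths of `𝓑(G)`. -/
theorem stmt4 [Fintype G] (hcard : 3 ≤ Fintype.card G)
    (hyp : (∃ a : G, addOrderOf a = 4) ∨
      (∃ a b : G, addOrderOf a = 2 ∧ addOrderOf b = 2 ∧ a ≠ b) ∨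
      (∃ p : ℕ, p.Prime ∧ Odd p ∧ ∃ a : G, addOrderOf a = p))
    (y k : ℕ) :
    ∃ B : Multiset G, B.sum = 0 ∧ ZSLengths B = Set.Icc (y + 2 * k) (y + 3 * k) := by
  rcases hyp with ⟨g, hg⟩ | ⟨a, b, ha, hb, hab⟩ | ⟨p, hprime, hodd, g, hg⟩
  · obtain ⟨h0, hsum, hL⟩ := caseC g hg k
    exact assemble _ h0 hsum (2*k) k y le_rfl hL
  · obtain ⟨h0, hsum, hL⟩ := caseB a b ha hb hab k
    exact assemble _ h0 hsum (2*k) k y le_rfl hL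
  · obtain ⟨d, hd⟩ := hodd
    have hd1 : 1 ≤ d := by
      have h2 : 2 ≤ p := hprime.two_le
      have : p ≠ 2 := by
        intro h
        rw [h] at hd
        omega
      omega
    set α := k / d + (if k % d = 0 then 0 else 1) with hα
    obtain ⟨h0, hsum, hL⟩ := caseA g d p α k hd1 (by omega) hprime hg hα
    have hαk : α ≤ k := by
      rw [hα]
      split_ifs with h
      · simpa using Nat.div_le_self k d
      · have hk0 : 0 < k := by
          rcases Nat.eq_zero_or_pos k with h1 | h1
          · exfalso; apply h; rw [h1]; exact Nat.zero_mod d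
          · exact h1
        have hd2 : 2 ≤ d := by
          rcases Nat.lt_or_ge d 2 with h1 | h1
          · exfalso
            apply h
            have hd1' : d = 1 := by omega
            rw [hd1']
            exact Nat.mod_one k
          · exact h1
        have := Nat.div_lt_self hk0 (by omega : 1 < d)
        omega
    have hm : α + k ≤ 2 * k := by omega
    exact assemble _ h0 hsum (α + k) k y hm hL
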